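/- Local central limit theorem for the rescaled simple random walk: if ^dp_t denotes the transition kernel of the rate-1 continuous-time simple symmetric random walk on ℤ and p_t the one-dimensional Gaussian heat kernel, then for every fixed t > 0, sup_{x ∈ ℤ} |n · ^dp_{n²t}(x) − p_t(x/n)| → 0 as n → ∞. -/

import Mathlib

open Complex Real MeasureTheory Filter Topology intervalIntegral

lemma orth (j : ℤ) : (∫ θ in (-π)..π, Complex.exp ((j * Complex.I) * θ)) =
    if j = 0 then (2 * π : ℂ) else 0 := by
  by_cases hj : j = 0
  · simp [hj]; ring
  · have hc : (j : ℂ) * Complex.I ≠ 0 := by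
      simp [Complex.I_ne_zero, hj]
    rw [integral_exp_mul_complex hc, if_neg hj]
    have : Complex.exp ((j * Complex.I) * π) = Complex.exp ((j * Complex.I) * (-π : ℝ)) := by
      have h2 : ((j * Complex.I) * π) = ((j * Complex.I) * (-π : ℝ)) + (j : ℂ) * (2 * π * Complex.I) := by
        push_cast; ring
      rw [h2, Complex.exp_add, Complex.exp_int_mul_two_pi_mul_I j, mul_one]
    rw [this, sub_self, zero_div]

/-- Number of nearest-neighbour paths of length `m` on `ℤ` from `0` to `x`. -/
def pathCount (m : ℕ) (x : ℤ) : ℕ :=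
  if ((m : ℤ) + x) % 2 = 0 ∧ x.natAbs ≤ m then Nat.choose m (((m : ℤ) + x).toNat / 2) else 0

lemma cos_pow_expand (m : ℕ) (x : ℤ) (θ : ℝ) :
    ((Real.cos θ : ℂ))^m * Complex.exp (((-x : ℤ) * Complex.I) * θ)
    = (2:ℂ)⁻¹ ^ m * ∑ k ∈ Finset.range (m+1),
        (m.choose k : ℂ) * Complex.exp ((((2*(k:ℤ) - m - x : ℤ) : ℂ) * Complex.I) * θ) := by
  have h2 : ((2:ℂ) * Real.cos θ) = Complex.exp (Complex.I * θ) + Complex.exp (-(Complex.I * θ)) := by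
    rw [Complex.ofReal_cos, Complex.cos]
    ring_nf
  have hc : ((Real.cos θ : ℂ))^m = (2:ℂ)⁻¹ ^ m * (Complex.exp (Complex.I * θ) + Complex.exp (-(Complex.I * θ)))^m := by
    rw [← h2]; rw [mul_pow]; ring_nf
    rw [mul_assoc, ← mul_pow]; norm_num
  rw [hc, add_pow]
  rw [mul_assoc, Finset.sum_mul]
  congr 1
  apply Finset.sum_congr rfl
  intro k hk
  simp only [Finset.mem_range] at hk
  rw [← Complex.exp_nat_mul, ← Complex.exp_nat_mul, ← Complex.exp_add, mul_right_comm,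
    ← Complex.exp_add, mul_comm]
  congr 2
  have hkm : (((m - k : ℕ) : ℂ)) = (m : ℂ) - k := by
    have : k ≤ m := Nat.lt_succ_iff.mp hk
    push_cast [this]; ring
  rw [hkm]
  push_cast
  ring

lemma sum_ite_pathCount (m : ℕ) (x : ℤ) :
    ∑ k ∈ Finset.range (m+1), (m.choose k : ℂ) * (if (2*(k:ℤ) - m - x) = 0 then (2*π:ℂ) else 0)
    = 2 * π * (pathCount m x : ℂ) := by
  by_cases h : ((m : ℤ) + x) % 2 = 0 ∧ x.natAbs ≤ m
  · set k0 := (((m : ℤ) + x).toNat / 2) with hk0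
    have h2k0 : 2*(k0:ℤ) - m - x = 0 := by omega
    rw [Finset.sum_eq_single k0]
    · rw [if_pos h2k0, pathCount, if_pos h]
      ring
    · intro k hk hne
      rw [if_neg, mul_zero]
      simp only [Finset.mem_range] at hk
      omega
    · intro hk
      simp only [Finset.mem_range] at hk
      omega
  · rw [pathCount, if_neg h]
    push_cast
    rw [mul_zero]
    apply Finset.sum_eq_zero
    intro k hk
    simp only [Finset.mem_range] at hk
    rw [if_neg, mul_zero]
    omega

set_option maxHeartbeats 1000000 in
lemma cos_pow_integral (m : ℕ) (x : ℤ) :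
    (∫ θ in (-π)..π, ((Real.cos θ : ℂ))^m * Complex.exp ((((-x : ℤ) : ℂ) * Complex.I) * θ))
    = 2 * π * (pathCount m x : ℂ) / 2^m := by
  have hint : ∀ j : ℤ, IntervalIntegrable (fun θ : ℝ => Complex.exp ((j * Complex.I) * θ))
      MeasureTheory.volume (-π) π := by
    intro j
    apply Continuous.intervalIntegrable
    exact Complex.continuous_exp.comp (continuous_const.mul Complex.continuous_ofReal)
  simp_rw [cos_pow_expand]
  rw [intervalIntegral.integral_const_mul, intervalIntegral.integral_finset_sum]
  · simp_rw [intervalIntegral.integral_const_mul, orth, sum_ite_pathCount]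
    rw [eq_div_iff (pow_ne_zero _ (two_ne_zero)), mul_comm ((2:ℂ)⁻¹^m), mul_assoc, ← mul_pow]
    norm_num
  · intro k hk
    exact (hint (2*(k:ℤ) - m - x)).const_mul _

lemma cos_pow_integral_real (m : ℕ) (x : ℤ) :
    (∫ θ in (-π)..π, (Real.cos θ)^m * Real.cos ((x:ℝ)*θ)) = 2*π*(pathCount m x : ℝ)/2^m := by
  have hf : IntervalIntegrable
      (fun θ : ℝ => ((Real.cos θ : ℂ))^m * Complex.exp ((((-x : ℤ) : ℂ) * Complex.I) * θ))
      MeasureTheory.volume (-π) π := by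
    apply Continuous.intervalIntegrable
    fun_prop
  have h := ContinuousLinearMap.intervalIntegral_comp_comm Complex.reCLM hf
  rw [cos_pow_integral] at h
  have hre : ∀ θ : ℝ,
      Complex.reCLM (((Real.cos θ : ℂ))^m * Complex.exp ((((-x : ℤ) : ℂ) * Complex.I) * θ))
      = (Real.cos θ)^m * Real.cos ((x:ℝ)*θ) := by
    intro θ
    have harg : ((((-x : ℤ) : ℂ) * Complex.I) * θ) = ((((-(x:ℝ)) * θ : ℝ)) : ℂ) * Complex.I := by
      push_cast; ring
    rw [Complex.reCLM_apply, harg, ← Complex.ofReal_pow, Complex.re_ofReal_mul,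
      Complex.exp_ofReal_mul_I_re, neg_mul, Real.cos_neg]
  simp_rw [hre] at h
  rw [h]
  have : ((2 * π * (pathCount m x : ℝ) / 2^m : ℝ) : ℂ) = 2 * (π:ℂ) * (pathCount m x : ℂ) / 2^m := by
    push_cast; ring
  rw [← this, Complex.reCLM_apply, Complex.ofReal_re]

/-- Transition kernel of the rate-1 continuous-time simple symmetric random walk on `ℤ`
(generator `(1/2)Δ`): `^dp_t(x) = P₀(X_t = x) = e^{-t} Σ_m (t^m/m!) P(S_m = x)`. -/
noncomputable def srwKernel (t : ℝ) (x : ℤ) : ℝ :=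
  Real.exp (-t) * ∑' m : ℕ, t ^ m / (m.factorial : ℝ) * (pathCount m x : ℝ) / 2 ^ m

lemma srwKernel_eq_integral (t : ℝ) (ht : 0 < t) (x : ℤ) :
    srwKernel t x = (2*π)⁻¹ * ∫ θ in (-π)..π, Real.exp (-(t * (1 - Real.cos θ))) * Real.cos ((x:ℝ)*θ) := by
  have hms : ∀ m : ℕ, IntervalIntegrable
      (fun θ : ℝ => t^m / (m.factorial : ℝ) * ((Real.cos θ)^m * Real.cos ((x:ℝ)*θ)))
      MeasureTheory.volume (-π) π := fun m => by
    apply Continuous.intervalIntegrable; fun_prop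
  -- step 1: each term of the tsum as an integral
  have hterm : ∀ m : ℕ, t ^ m / (m.factorial : ℝ) * (pathCount m x : ℝ) / 2 ^ m
      = (2*π)⁻¹ * ∫ θ in (-π)..π, t^m / (m.factorial : ℝ) * ((Real.cos θ)^m * Real.cos ((x:ℝ)*θ)) := by
    intro m
    rw [intervalIntegral.integral_const_mul, cos_pow_integral_real]
    have hpi0 : (π:ℝ) ≠ 0 := Real.pi_ne_zero
    field_simp
  -- step 2: swap tsum and integral
  have hpi : (-π : ℝ) ≤ π := by linarith [Real.pi_pos]
  have hswap : ∑' m : ℕ, (∫ θ in Set.Ioc (-π) π,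
        t^m / (m.factorial : ℝ) * ((Real.cos θ)^m * Real.cos ((x:ℝ)*θ)))
      = ∫ θ in Set.Ioc (-π) π, ∑' m : ℕ, t^m / (m.factorial : ℝ) * ((Real.cos θ)^m * Real.cos ((x:ℝ)*θ)) := by
    apply MeasureTheory.integral_tsum_of_summable_integral_norm
    · intro m
      apply Continuous.integrableOn_Ioc
      fun_prop
    · apply Summable.of_nonneg_of_le (fun m => MeasureTheory.integral_nonneg (fun θ => norm_nonneg _))
        (fun m => ?_) (Summable.mul_right (2*π) (Real.summable_pow_div_factorial t))
      calc (∫ θ in Set.Ioc (-π) π, ‖t^m / (m.factorial : ℝ) * ((Real.cos θ)^m * Real.cos ((x:ℝ)*θ))‖)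
          ≤ ∫ θ in Set.Ioc (-π) π, t^m / (m.factorial : ℝ) := by
            apply MeasureTheory.integral_mono_of_nonneg
            · exact Filter.Eventually.of_forall fun θ => norm_nonneg _
            · exact MeasureTheory.integrableOn_const (by
                rw [Real.volume_Ioc]; exact ENNReal.ofReal_ne_top)
            · apply Filter.Eventually.of_forall
              intro θ
              dsimp only
              rw [norm_mul, norm_mul]
              have h1 : ‖t^m / (m.factorial : ℝ)‖ = t^m / (m.factorial : ℝ) := by
                rw [Real.norm_of_nonneg (by positivity)]
              rw [h1]
              have h2 : ‖(Real.cos θ)^m‖ * ‖Real.cos ((x:ℝ)*θ)‖ ≤ 1 := by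
                apply mul_le_one₀
                · rw [norm_pow]; exact pow_le_one₀ (norm_nonneg _) (Real.abs_cos_le_one θ)
                · positivity
                · exact Real.abs_cos_le_one _
              nlinarith [div_nonneg (pow_nonneg ht.le m) (Nat.cast_nonneg m.factorial : (0:ℝ) ≤ m.factorial)]
          _ ≤ t^m / (m.factorial : ℝ) * (2*π) := by
            rw [MeasureTheory.setIntegral_const, MeasureTheory.measureReal_def, Real.volume_Ioc, smul_eq_mul]
            rw [ENNReal.toReal_ofReal (by linarith)]
            have : π - -π = 2*π := by ring
            rw [this, mul_comm]
  -- step 3: pointwise sum is the exponential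
  have hsum : ∀ θ : ℝ, (∑' m : ℕ, t^m / (m.factorial : ℝ) * ((Real.cos θ)^m * Real.cos ((x:ℝ)*θ)))
      = Real.exp (t * Real.cos θ) * Real.cos ((x:ℝ)*θ) := by
    intro θ
    have : ∀ m : ℕ, t^m / (m.factorial : ℝ) * ((Real.cos θ)^m * Real.cos ((x:ℝ)*θ))
        = (t * Real.cos θ)^m / (m.factorial : ℝ) * Real.cos ((x:ℝ)*θ) := by
      intro m; rw [mul_pow]; ring
    simp_rw [this]
    rw [tsum_mul_right]
    congr 1
    rw [Real.exp_eq_exp_ℝ, NormedSpace.exp_eq_tsum_div]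
  -- assemble
  rw [srwKernel]
  calc Real.exp (-t) * ∑' m : ℕ, t ^ m / (m.factorial : ℝ) * (pathCount m x : ℝ) / 2 ^ m
      = Real.exp (-t) * ((2*π)⁻¹ * ∑' m : ℕ, (∫ θ in Set.Ioc (-π) π,
          t^m / (m.factorial : ℝ) * ((Real.cos θ)^m * Real.cos ((x:ℝ)*θ)))) := by
        congr 1
        rw [← tsum_mul_left]
        apply tsum_congr
        intro m
        rw [hterm m, intervalIntegral.integral_of_le hpi]
    _ = (2*π)⁻¹ * ∫ θ in Set.Ioc (-π) π,
          Real.exp (-t) * (Real.exp (t * Real.cos θ) * Real.cos ((x:ℝ)*θ)) := by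
        rw [hswap]
        simp_rw [hsum]
        rw [MeasureTheory.integral_const_mul]
        ring
    _ = (2*π)⁻¹ * ∫ θ in (-π)..π, Real.exp (-(t * (1 - Real.cos θ))) * Real.cos ((x:ℝ)*θ) := by
        rw [intervalIntegral.integral_of_le hpi]
        congr 1
        apply MeasureTheory.setIntegral_congr_fun measurableSet_Ioc
        intro θ _
        dsimp only
        rw [← mul_assoc, ← Real.exp_add]
        congr 2
        ring

lemma gauss_cos_integral (t : ℝ) (ht : 0 < t) (y : ℝ) :
    (∫ u : ℝ, Real.cos (y*u) * Real.exp (-(t/2) * u^2))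
      = Real.sqrt (2*π/t) * Real.exp (-(y^2)/(2*t)) := by
  have hb : (0:ℝ) < ((t:ℂ)/2).re := by simp; positivity
  have hint : MeasureTheory.Integrable
      (fun u : ℝ => Complex.exp (Complex.I * (y:ℂ) * u) * Complex.exp (-((t:ℂ)/2) * u^2)) := by
    have h0 := integrable_cexp_quadratic hb (Complex.I * (y:ℂ)) 0
    apply h0.congr
    apply Filter.Eventually.of_forall
    intro u
    dsimp only
    rw [← Complex.exp_add]
    ring_nf
  have hfi := fourierIntegral_gaussian hb (y : ℂ)
  have hre := Complex.reCLM.integral_comp_comm hint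
  have hlhs : ∀ u : ℝ, (Complex.exp (Complex.I * (y:ℂ) * u) * Complex.exp (-((t:ℂ)/2) * u^2)).re
      = Real.cos (y*u) * Real.exp (-(t/2) * u^2) := by
    intro u
    have h1 : Complex.exp (Complex.I * (y:ℂ) * u) = Complex.exp (((y*u : ℝ) : ℂ) * Complex.I) := by
      congr 1; push_cast; ring
    have h2 : Complex.exp (-((t:ℂ)/2) * u^2) = ((Real.exp (-(t/2) * u^2) : ℝ) : ℂ) := by
      rw [Complex.ofReal_exp]; congr 1; push_cast; ring
    rw [h1, h2, mul_comm, Complex.re_ofReal_mul, Complex.exp_ofReal_mul_I_re]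
    ring
  have hrhs : ((π:ℂ) / ((t:ℂ)/2)) ^ (1/2 : ℂ) * Complex.exp (-(y:ℂ)^2 / (4*((t:ℂ)/2)))
      = ((Real.sqrt (2*π/t) * Real.exp (-(y^2)/(2*t)) : ℝ) : ℂ) := by
    have e1 : ((π:ℂ) / ((t:ℂ)/2)) = (((2*π/t : ℝ)) : ℂ) := by
      push_cast; field_simp
    have e2 : ((2*π/t : ℝ) : ℂ) ^ (1/2 : ℂ) = (((2*π/t) ^ (1/2 : ℝ) : ℝ) : ℂ) := by
      rw [Complex.ofReal_cpow (by positivity)]; norm_num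
    have e3 : Complex.exp (-(y:ℂ)^2 / (4*((t:ℂ)/2))) = ((Real.exp (-(y^2)/(2*t)) : ℝ) : ℂ) := by
      rw [Complex.ofReal_exp]; congr 1; push_cast; field_simp; ring
    rw [e1, e2, e3, ← Complex.ofReal_mul]
    congr 2
    rw [Real.sqrt_eq_rpow]
  rw [hfi, hrhs] at hre
  simp_rw [Complex.reCLM_apply, hlhs] at hre
  rw [hre, Complex.ofReal_re]

lemma one_sub_cos_sq_half (v : ℝ) : 1 - Real.cos v = 2 * Real.sin (v/2)^2 := by
  have h := Real.cos_sq (v/2)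
  have h2 := Real.sin_sq_add_cos_sq (v/2)
  have hv : 2 * (v/2) = v := by ring
  rw [hv] at h
  nlinarith

lemma one_sub_cos_lower {v : ℝ} (hv : |v| ≤ π) : 2/π^2 * v^2 ≤ 1 - Real.cos v := by
  wlog h0 : 0 ≤ v generalizing v
  · have := this (v := -v) (by rwa [abs_neg]) (by linarith [not_le.mp h0])
    simpa [Real.cos_neg] using this
  rw [_root_.abs_of_nonneg h0] at hv
  have hs : 2/π * (v/2) ≤ Real.sin (v/2) :=
    Real.mul_le_sin (by linarith) (by linarith)
  rw [one_sub_cos_sq_half]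
  have hvπ : 0 ≤ 2/π * (v/2) := by positivity
  have hpi := Real.pi_pos
  have hsq : (2/π * (v/2))^2 ≤ Real.sin (v/2)^2 := by nlinarith
  have : (2/π * (v/2))^2 = v^2/π^2 := by field_simp
  rw [this] at hsq
  calc 2/π^2 * v^2 = 2 * (v^2/π^2) := by ring
    _ ≤ 2 * Real.sin (v/2)^2 := by linarith

lemma sq_tendsto_one_sub_cos (u t : ℝ) :
    Filter.Tendsto (fun n : ℕ => (n:ℝ)^2 * t * (1 - Real.cos (u / n))) Filter.atTop
      (𝓝 (t * u^2 / 2)) := by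
  by_cases hu : u = 0
  · subst hu
    simp only [zero_div]
    simp
  · -- sin v / v → 1 at 0
    have hslope : Filter.Tendsto (fun v : ℝ => Real.sin v / v) (𝓝[≠] (0:ℝ)) (𝓝 1) := by
      have hd : HasDerivAt Real.sin 1 0 := by simpa using Real.hasDerivAt_sin 0
      have := hasDerivAt_iff_tendsto_slope.mp hd
      apply this.congr'
      filter_upwards [self_mem_nhdsWithin] with v hv
      simp [slope_def_field]
    have harg : Filter.Tendsto (fun n : ℕ => u / (2*n)) Filter.atTop (𝓝[≠] (0:ℝ)) := by
      rw [tendsto_nhdsWithin_iff]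
      constructor
      · apply Filter.Tendsto.div_atTop tendsto_const_nhds
        exact Filter.Tendsto.const_mul_atTop two_pos tendsto_natCast_atTop_atTop
      · filter_upwards [Filter.eventually_gt_atTop 0] with n hn
        have : (0:ℝ) < 2*n := by positivity
        simp [Set.mem_compl_singleton_iff, div_ne_zero hu this.ne']
    have hcomp : Filter.Tendsto (fun n : ℕ => Real.sin (u/(2*n)) / (u/(2*n))) Filter.atTop (𝓝 1) :=
      hslope.comp harg
    have hmain : Filter.Tendsto (fun n : ℕ => t * u^2 / 2 * (Real.sin (u/(2*n)) / (u/(2*n)))^2)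
        Filter.atTop (𝓝 (t * u^2 / 2)) := by
      have := (hcomp.pow 2).const_mul (t * u^2 / 2)
      simpa using this
    apply hmain.congr'
    filter_upwards [Filter.eventually_gt_atTop 0] with n hn
    have hn0 : (n:ℝ) ≠ 0 := Nat.cast_ne_zero.mpr hn.ne'
    have h1 : u / n / 2 = u / (2*n) := by ring
    rw [one_sub_cos_sq_half, h1]
    have h2n : u / (2*(n:ℝ)) ≠ 0 := div_ne_zero hu (by positivity)
    field_simp

/-- The one-dimensional Gaussian heat kernel `p_t(x) = (2πt)^{-1/2} exp(-x²/(2t))`. -/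
noncomputable def heatKernel (t x : ℝ) : ℝ :=
  (Real.sqrt (2 * Real.pi * t))⁻¹ * Real.exp (-(x ^ 2) / (2 * t))

lemma heatKernel_eq_integral (t : ℝ) (ht : 0 < t) (y : ℝ) :
    heatKernel t y = (2*π)⁻¹ * ∫ u : ℝ, Real.cos (y*u) * Real.exp (-(t/2) * u^2) := by
  rw [gauss_cos_integral t ht y, heatKernel]
  have hd : Real.sqrt (2*π/t) = Real.sqrt (2*π) / Real.sqrt t := Real.sqrt_div (by positivity) t
  have hm : Real.sqrt (2*π*t) = Real.sqrt (2*π) * Real.sqrt t := Real.sqrt_mul (by positivity) t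
  have hs : Real.sqrt (2*π) ^ 2 = 2*π := Real.sq_sqrt (by positivity)
  have h1 : Real.sqrt (2*π) ≠ 0 := by positivity
  have h2 : Real.sqrt t ≠ 0 := by positivity
  rw [hd, hm, ← mul_assoc]
  congr 1
  have hmul : Real.sqrt (2*π) * Real.sqrt (2*π) = 2*π := Real.mul_self_sqrt (by positivity)
  set s := Real.sqrt (2*π) with hsdef
  set r := Real.sqrt t with hrdef
  rw [← hmul]
  field_simp

noncomputable def Gn (t : ℝ) (n : ℕ) (u : ℝ) : ℝ :=
  Set.indicator (Set.Ioc (-((n:ℝ)*π)) ((n:ℝ)*π))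
    (fun u => Real.exp (-((n:ℝ)^2*t*(1 - Real.cos (u/n))))) u

lemma Gn_bound (t : ℝ) (ht : 0 < t) (n : ℕ) (u : ℝ) :
    |Gn t n u| ≤ Real.exp (-(2*t/π^2) * u^2) := by
  rw [Gn]
  by_cases hu : u ∈ Set.Ioc (-((n:ℝ)*π)) ((n:ℝ)*π)
  · rw [Set.indicator_of_mem hu]
    rw [_root_.abs_of_nonneg (Real.exp_pos _).le]
    apply Real.exp_le_exp.mpr
    have hpi := Real.pi_pos
    have hn0 : (0:ℝ) < (n:ℝ) := by
      rcases hu with ⟨h1, h2⟩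
      nlinarith
    have habs : |u / n| ≤ π := by
      rw [abs_div, _root_.abs_of_nonneg hn0.le, div_le_iff₀ hn0]
      rcases hu with ⟨h1, h2⟩
      rw [abs_le]
      constructor <;> nlinarith
    have key := one_sub_cos_lower habs
    have hn0' : ((n:ℝ)) ≠ 0 := hn0.ne'
    have hπ0 : (π:ℝ) ≠ 0 := Real.pi_ne_zero
    have heq : 2*t/π^2 * u^2 = (n:ℝ)^2*t*(2/π^2 * (u/n)^2) := by
      rw [div_pow]
      field_simp
    have hmul := mul_le_mul_of_nonneg_left key (by positivity : (0:ℝ) ≤ (n:ℝ)^2*t)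
    rw [← heq] at hmul
    linarith
  · rw [Set.indicator_of_notMem hu, _root_.abs_zero]
    exact (Real.exp_pos _).le

lemma Gn_tendsto (t : ℝ) (ht : 0 < t) (u : ℝ) :
    Filter.Tendsto (fun n : ℕ => Gn t n u) Filter.atTop (𝓝 (Real.exp (-(t/2) * u^2))) := by
  have hπ : Filter.Tendsto (fun n : ℕ => (n:ℝ)*π) Filter.atTop Filter.atTop :=
    Filter.Tendsto.atTop_mul_const Real.pi_pos tendsto_natCast_atTop_atTop
  have hev : ∀ᶠ n : ℕ in Filter.atTop,
      Real.exp (-((n:ℝ)^2*t*(1 - Real.cos (u/n)))) = Gn t n u := by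
    filter_upwards [hπ.eventually_gt_atTop |u|] with n hn
    have hmem : u ∈ Set.Ioc (-((n:ℝ)*π)) ((n:ℝ)*π) := by
      rcases abs_lt.mp hn with ⟨h1, h2⟩
      exact ⟨h1, h2.le⟩
    rw [Gn, Set.indicator_of_mem hmem]
  have hlim : Filter.Tendsto (fun n : ℕ => Real.exp (-((n:ℝ)^2*t*(1 - Real.cos (u/n)))))
      Filter.atTop (𝓝 (Real.exp (-(t/2) * u^2))) := by
    have h1 := (sq_tendsto_one_sub_cos u t).neg
    have h2 := (Real.continuous_exp.continuousAt (x := -(t * u^2 / 2))).tendsto.comp h1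
    convert h2 using 2
    · rfl
    · congr 1; ring
  exact hlim.congr' hev

lemma E_tendsto (t : ℝ) (ht : 0 < t) :
    Filter.Tendsto (fun n : ℕ => ∫ u : ℝ, |Gn t n u - Real.exp (-(t/2) * u^2)|)
      Filter.atTop (𝓝 0) := by
  have hGm : ∀ n : ℕ, MeasureTheory.AEStronglyMeasurable (Gn t n) MeasureTheory.volume := by
    intro n
    apply MeasureTheory.AEStronglyMeasurable.indicator _ measurableSet_Ioc
    apply Continuous.aestronglyMeasurable
    fun_prop
  have hgm : MeasureTheory.AEStronglyMeasurable (fun u : ℝ => Real.exp (-(t/2) * u^2))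
      MeasureTheory.volume := by
    apply Continuous.aestronglyMeasurable
    fun_prop
  have h0 : (0:ℝ) = ∫ u : ℝ, (0:ℝ) := by simp
  rw [h0]
  apply MeasureTheory.tendsto_integral_of_dominated_convergence
    (fun u => Real.exp (-(2*t/π^2) * u^2) + Real.exp (-(t/2) * u^2))
  · intro n
    have := ((hGm n).sub hgm).norm
    simpa [Real.norm_eq_abs] using this
  · exact (integrable_exp_neg_mul_sq (by positivity)).add (integrable_exp_neg_mul_sq (by positivity))
  · intro n
    apply Filter.Eventually.of_forall
    intro u
    rw [Real.norm_eq_abs, _root_.abs_abs]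
    calc |Gn t n u - Real.exp (-(t/2) * u^2)| ≤ |Gn t n u| + |Real.exp (-(t/2) * u^2)| :=
          abs_sub _ _
      _ ≤ Real.exp (-(2*t/π^2) * u^2) + Real.exp (-(t/2) * u^2) := by
          apply add_le_add (Gn_bound t ht n u)
          rw [_root_.abs_of_nonneg (Real.exp_pos _).le]
  · apply Filter.Eventually.of_forall
    intro u
    have := ((Gn_tendsto t ht u).sub (tendsto_const_nhds
      (x := Real.exp (-(t/2) * u^2)) (f := Filter.atTop))).abs
    simpa using this

lemma srw_rescaled (t : ℝ) (ht : 0 < t) (n : ℕ) (hn : 1 ≤ n) (x : ℤ) :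
    (n:ℝ) * srwKernel ((n:ℝ)^2*t) x
      = (2*π)⁻¹ * ∫ u : ℝ, Real.cos (((x:ℝ)/n) * u) * Gn t n u := by
  have hpi := Real.pi_pos
  have hn0 : (0:ℝ) < n := by exact_mod_cast hn
  have hn0' : ((n:ℝ)) ≠ 0 := hn0.ne'
  have ht' : 0 < (n:ℝ)^2*t := by positivity
  set F : ℝ → ℝ := fun θ => Real.exp (-((n:ℝ)^2*t * (1 - Real.cos θ))) * Real.cos ((x:ℝ)*θ)
    with hF
  have hcomp := intervalIntegral.integral_comp_div (a := -((n:ℝ)*π)) (b := (n:ℝ)*π)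
    (c := (n:ℝ)) (f := F) hn0'
  have e1 : (-((n:ℝ)*π))/n = -π := by field_simp
  have e2 : ((n:ℝ)*π)/n = π := by field_simp
  rw [e1, e2] at hcomp
  have hle : (-((n:ℝ)*π)) ≤ (n:ℝ)*π := by nlinarith
  calc (n:ℝ) * srwKernel ((n:ℝ)^2*t) x
      = (2*π)⁻¹ * ((n:ℝ) • ∫ θ in (-π)..π, F θ) := by
        rw [srwKernel_eq_integral _ ht' x, smul_eq_mul]; ring
    _ = (2*π)⁻¹ * ∫ u in (-((n:ℝ)*π))..((n:ℝ)*π), F (u/n) := by rw [hcomp]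
    _ = (2*π)⁻¹ * ∫ u in (-((n:ℝ)*π))..((n:ℝ)*π),
          Real.cos (((x:ℝ)/n) * u) * Real.exp (-((n:ℝ)^2*t * (1 - Real.cos (u/n)))) := by
        congr 1
        apply intervalIntegral.integral_congr
        intro u _
        rw [hF]
        dsimp only
        rw [mul_comm]
        congr 2
        field_simp
    _ = (2*π)⁻¹ * ∫ u in Set.Ioc (-((n:ℝ)*π)) ((n:ℝ)*π),
          Real.cos (((x:ℝ)/n) * u) * Real.exp (-((n:ℝ)^2*t * (1 - Real.cos (u/n)))) := by
        rw [intervalIntegral.integral_of_le hle]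
    _ = (2*π)⁻¹ * ∫ u : ℝ, Real.cos (((x:ℝ)/n) * u) * Gn t n u := by
        congr 1
        rw [← MeasureTheory.integral_indicator measurableSet_Ioc]
        congr 1
        funext u
        rw [Gn]
        by_cases hu : u ∈ Set.Ioc (-((n:ℝ)*π)) ((n:ℝ)*π)
        · rw [Set.indicator_of_mem hu, Set.indicator_of_mem hu]
        · rw [Set.indicator_of_notMem hu, Set.indicator_of_notMem hu, mul_zero]

lemma diff_bound (t : ℝ) (ht : 0 < t) (n : ℕ) (hn : 1 ≤ n) (x : ℤ) :
    |(n:ℝ) * srwKernel ((n:ℝ)^2*t) x - heatKernel t ((x:ℝ)/n)|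
      ≤ (2*π)⁻¹ * ∫ u : ℝ, |Gn t n u - Real.exp (-(t/2) * u^2)| := by
  have hpi := Real.pi_pos
  set a : ℝ := (x:ℝ)/n with ha
  set g : ℝ → ℝ := fun u => Real.exp (-(t/2) * u^2) with hg
  have hgi : MeasureTheory.Integrable g := integrable_exp_neg_mul_sq (by positivity)
  have hGni : MeasureTheory.Integrable (Gn t n) := by
    have : Gn t n = Set.indicator (Set.Ioc (-((n:ℝ)*π)) ((n:ℝ)*π))
        (fun u => Real.exp (-((n:ℝ)^2*t*(1 - Real.cos (u/n))))) := by
      funext u; rw [Gn]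
    rw [this, MeasureTheory.integrable_indicator_iff measurableSet_Ioc]
    apply Continuous.integrableOn_Ioc
    fun_prop
  have hcosm : MeasureTheory.AEStronglyMeasurable (fun u : ℝ => Real.cos (a * u))
      MeasureTheory.volume := by
    apply Continuous.aestronglyMeasurable; fun_prop
  have hcbd : ∃ C, ∀ u : ℝ, ‖Real.cos (a * u)‖ ≤ C :=
    ⟨1, fun u => by rw [Real.norm_eq_abs]; exact Real.abs_cos_le_one _⟩
  have hGci : MeasureTheory.Integrable (fun u : ℝ => Real.cos (a * u) * Gn t n u) :=
    hGni.bdd_mul hcosm (Filter.Eventually.of_forall hcbd.choose_spec)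
  have hgci : MeasureTheory.Integrable (fun u : ℝ => Real.cos (a * u) * g u) :=
    hgi.bdd_mul hcosm (Filter.Eventually.of_forall hcbd.choose_spec)
  rw [srw_rescaled t ht n hn x, heatKernel_eq_integral t ht a]
  have hsplit : (2*π)⁻¹ * (∫ u : ℝ, Real.cos (a * u) * Gn t n u)
      - (2*π)⁻¹ * (∫ u : ℝ, Real.cos (a * u) * g u)
      = (2*π)⁻¹ * ∫ u : ℝ, Real.cos (a * u) * (Gn t n u - g u) := by
    rw [← mul_sub, ← MeasureTheory.integral_sub hGci hgci]
    congr 1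
    apply MeasureTheory.integral_congr_ae
    apply Filter.Eventually.of_forall
    intro u
    dsimp only
    ring
  rw [hsplit, abs_mul, _root_.abs_of_nonneg (by positivity : (0:ℝ) ≤ (2*π)⁻¹)]
  apply mul_le_mul_of_nonneg_left _ (by positivity : (0:ℝ) ≤ (2*π)⁻¹)
  calc |∫ u : ℝ, Real.cos (a * u) * (Gn t n u - g u)|
      ≤ ∫ u : ℝ, ‖Real.cos (a * u) * (Gn t n u - g u)‖ := by
        rw [← Real.norm_eq_abs]
        exact MeasureTheory.norm_integral_le_integral_norm _
    _ ≤ ∫ u : ℝ, |Gn t n u - g u| := by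
        apply MeasureTheory.integral_mono
        · exact ((hGci.sub hgci).congr (Filter.Eventually.of_forall fun u => by
            simp only [Pi.sub_apply]; ring)).norm
        · exact (hGni.sub hgi).abs
        · intro u
          dsimp only
          rw [Real.norm_eq_abs, abs_mul]
          calc |Real.cos (a*u)| * |Gn t n u - g u| ≤ 1 * |Gn t n u - g u| :=
            mul_le_mul_of_nonneg_right (Real.abs_cos_le_one _) (abs_nonneg _)
          _ = |Gn t n u - g u| := one_mul _

/-- Local central limit theorem for the diffusively rescaled simple random walk: for every
`t > 0`, `sup_{x ∈ ℤ} |n · ^dp_{n²t}(x) − p_t(x/n)| → 0` as `n → ∞`. -/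
theorem srw_local_clt (t : ℝ) (ht : 0 < t) :
    ∀ δ > (0 : ℝ), ∃ N : ℕ, ∀ n : ℕ, N ≤ n → ∀ x : ℤ,
      |(n : ℝ) * srwKernel ((n : ℝ) ^ 2 * t) x - heatKernel t ((x : ℝ) / n)| ≤ δ := by
  intro δ hδ
  have hpi := Real.pi_pos
  have hE := E_tendsto t ht
  have hlt : (0:ℝ) < 2*π*δ := by positivity
  have hev : ∀ᶠ n : ℕ in Filter.atTop,
      (∫ u : ℝ, |Gn t n u - Real.exp (-(t/2) * u^2)|) < 2*π*δ :=
    hE.eventually_lt_const hlt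
  obtain ⟨N₀, hN₀⟩ := Filter.eventually_atTop.mp hev
  refine ⟨max N₀ 1, fun n hn x => ?_⟩
  have hn1 : 1 ≤ n := le_trans (le_max_right _ _) hn
  have hnN : N₀ ≤ n := le_trans (le_max_left _ _) hn
  calc |(n : ℝ) * srwKernel ((n : ℝ) ^ 2 * t) x - heatKernel t ((x : ℝ) / n)|
      ≤ (2*π)⁻¹ * ∫ u : ℝ, |Gn t n u - Real.exp (-(t/2) * u^2)| := diff_bound t ht n hn1 x
    _ ≤ (2*π)⁻¹ * (2*π*δ) := by
        apply mul_le_mul_of_nonneg_left (hN₀ n hnN).le (by positivity)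
    _ = δ := by field_simp
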